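/- arXiv:2405.14461 — 6 statements merged into one kernel-verified Lean document; each statement's English description precedes it below -/
import Mathlib

section
/- Let α > 0 be a real constant and let a : ℝ → ℝ be differentiable at a time t with a(t) ≠ 0. Then the composition t ↦ sign(a(t))·|a(t)|^(|a(t)|^α) is differentiable at t with derivative |a(t)|^(|a(t)|^α + α − 1)·(1 + α·ln|a(t)|)·a'(t). -/
open Real

lemma tower_hasDerivAt (α : ℝ) {x : ℝ} (hx : 0 < x) :
    HasDerivAt (fun y : ℝ => y ^ (y ^ α))
      (x ^ (x ^ α + α - 1) * (1 + α * Real.log x)) x := by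
  have hxne : x ≠ 0 := ne_of_gt hx
  have h1 : HasDerivAt (fun y : ℝ => y ^ α) (α * x ^ (α - 1)) x := by
    simpa [mul_comm] using Real.hasDerivAt_rpow_const (p := α) (Or.inl hxne)
  have hlog : HasDerivAt Real.log x⁻¹ x := Real.hasDerivAt_log hxne
  have hinner : HasDerivAt (fun y : ℝ => y ^ α * Real.log y)
      (α * x ^ (α - 1) * Real.log x + x ^ α * x⁻¹) x := h1.mul hlog
  have hexp := hinner.exp
  have heq : (fun y : ℝ => Real.exp (y ^ α * Real.log y)) =ᶠ[nhds x]
      (fun y : ℝ => y ^ (y ^ α)) := by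
    filter_upwards [eventually_gt_nhds hx] with y hy
    rw [mul_comm, ← Real.rpow_def_of_pos hy]
  have h2 := hexp.congr_of_eventuallyEq heq.symm
  refine h2.congr_deriv ?_
  rw [mul_comm (x ^ α) (Real.log x), ← Real.rpow_def_of_pos hx]
  have e1 : x ^ (x ^ α + α - 1) = x ^ (x ^ α) * (x ^ (α - 1)) := by
    rw [← Real.rpow_add hx]; ring_nf
  have e2 : x ^ (α - 1) = x ^ α * x⁻¹ := by
    rw [Real.rpow_sub hx, Real.rpow_one, div_eq_mul_inv]
  rw [e1, e2]; ring

/-- Lemma 1: if a is differentiable at t with a(t) ≠ 0 then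
t ↦ sign(a(t))·|a(t)|^(|a(t)|^α) is differentiable at t with derivative
|a(t)|^(|a(t)|^α + α − 1)·(1 + α·ln|a(t)|)·a'(t). -/
theorem powerTower_comp_hasDerivAt (α : ℝ) (hα : 0 < α)
    (a : ℝ → ℝ) (t a' : ℝ) (ha : HasDerivAt a a' t) (hne : a t ≠ 0) :
    HasDerivAt (fun s : ℝ => Real.sign (a s) * |a s| ^ (|a s| ^ α))
      (|a t| ^ (|a t| ^ α + α - 1) * (1 + α * Real.log |a t|) * a') t := by
  have hcont : ContinuousAt a t := ha.continuousAt
  rcases lt_or_gt_of_ne hne with hlt | hgt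
  · -- a t < 0
    have hu : HasDerivAt (fun s => -a s) (-a') t := ha.neg
    have hpos : 0 < -a t := by linarith
    have hc := (tower_hasDerivAt α hpos).comp t hu
    have hc2 := hc.neg
    have hev : ∀ᶠ s in nhds t, a s < 0 := hcont.eventually (eventually_lt_nhds hlt)
    have heq : (fun s => -(-a s) ^ ((-a s) ^ α)) =ᶠ[nhds t]
        (fun s : ℝ => Real.sign (a s) * |a s| ^ (|a s| ^ α)) := by
      filter_upwards [hev] with s hs
      rw [Real.sign_of_neg hs, abs_of_neg hs]; ring
    have := hc2.congr_of_eventuallyEq heq.symm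
    refine this.congr_deriv ?_
    rw [abs_of_neg hlt]; ring
  · -- a t > 0
    have hc := (tower_hasDerivAt α hgt).comp t ha
    have hev : ∀ᶠ s in nhds t, 0 < a s := hcont.eventually (eventually_gt_nhds hgt)
    have heq : (fun s => (a s) ^ ((a s) ^ α)) =ᶠ[nhds t]
        (fun s : ℝ => Real.sign (a s) * |a s| ^ (|a s| ^ α)) := by
      filter_upwards [hev] with s hs
      rw [Real.sign_of_pos hs, abs_of_pos hs]; ring
    have := hc.congr_of_eventuallyEq heq.symm
    refine this.congr_deriv ?_
    rw [abs_of_pos hgt]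
end

section
/- Let β > 1 and K₁ > 0 be real constants. Let x₁, x₂, u : ℝ → ℝ with x₁, x₂ differentiable at a time t, ẋ₁(t) = x₂(t), ẋ₂(t) = u(t), and x₁(t) ≠ 0. Define z₂ = x₂ + K₁·sign(x₁)·|x₁|^(|x₁|^β). Then z₂ is differentiable at t with ż₂(t) = u(t) + K₁·|x₁(t)|^(|x₁(t)|^β + β − 1)·(1 + β·ln|x₁(t)|)·ẋ₁(t). -/
/-- Second backstepping step: derivative of the error z₂ = x₂ + K₁·sign(x₁)·|x₁|^(|x₁|^β)
along the double integrator ẋ₁ = x₂, ẋ₂ = u, when x₁(t) ≠ 0: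
ż₂ = u + K₁·|x₁|^(|x₁|^β + β − 1)·(1 + β·ln|x₁|)·ẋ₁. -/
theorem backstepping_error_deriv (β K₁ : ℝ) (hβ : 1 < β) (hK₁ : 0 < K₁)
    (x₁ x₂ u : ℝ → ℝ) (t x₁' x₂' : ℝ)
    (hx₁ : HasDerivAt x₁ x₁' t) (hx₂ : HasDerivAt x₂ x₂' t)
    (h1 : x₁' = x₂ t) (h2 : x₂' = u t) (hne : x₁ t ≠ 0) :
    HasDerivAt (fun s : ℝ => x₂ s + K₁ * Real.sign (x₁ s) * |x₁ s| ^ (|x₁ s| ^ β))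
      (u t + K₁ * |x₁ t| ^ (|x₁ t| ^ β + β - 1) * (1 + β * Real.log |x₁ t|) * x₁') t := by
  set ε := Real.sign (x₁ t) with hε
  have hεcases : ε = 1 ∨ ε = -1 := by
    rcases lt_trichotomy (x₁ t) 0 with h | h | h
    · right; exact Real.sign_of_neg h
    · exact absurd h hne
    · left; exact Real.sign_of_pos h
  have hεsq : ε * ε = 1 := by rcases hεcases with h | h <;> rw [h] <;> norm_num
  have hA : 0 < ε * x₁ t := by
    rcases lt_trichotomy (x₁ t) 0 with h | h | h
    · rw [hε, Real.sign_of_neg h]; nlinarith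
    · exact absurd h hne
    · rw [hε, Real.sign_of_pos h]; nlinarith
  have hcont : ContinuousAt (fun s => ε * x₁ s) t := hx₁.continuousAt.const_mul ε
  have hev : ∀ᶠ s in nhds t, 0 < ε * x₁ s := hcont.eventually (eventually_gt_nhds hA)
  -- derivative of the smooth local representative
  have h1' : HasDerivAt (fun s => ε * x₁ s) (ε * x₁') t := hx₁.const_mul ε
  have h2' : HasDerivAt (fun s => (ε * x₁ s) ^ β)
      ((ε * x₁') * β * (ε * x₁ t) ^ (β - 1)) t := h1'.rpow_const (Or.inl hA.ne')
  have h3' : HasDerivAt (fun s => Real.log (ε * x₁ s)) ((ε * x₁') / (ε * x₁ t)) t :=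
    h1'.log hA.ne'
  have h4' := (h2'.mul h3').exp
  have h5' := hx₂.add (h4'.const_mul (K₁ * ε))
  have heq : (fun s : ℝ => x₂ s + K₁ * Real.sign (x₁ s) * |x₁ s| ^ (|x₁ s| ^ β))
      =ᶠ[nhds t] (fun s : ℝ => x₂ s + K₁ * ε *
        Real.exp ((ε * x₁ s) ^ β * Real.log (ε * x₁ s))) := by
    filter_upwards [hev] with s hs
    have habs : |x₁ s| = ε * x₁ s := by
      rcases hεcases with h | h
      · rw [h] at hs ⊢; rw [one_mul] at hs ⊢; exact abs_of_pos hs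
      · rw [h] at hs ⊢; rw [abs_of_neg (by linarith)]; ring
    have hsign : Real.sign (x₁ s) = ε := by
      rcases hεcases with h | h
      · rw [h] at hs ⊢; rw [one_mul] at hs; exact Real.sign_of_pos hs
      · rw [h] at hs ⊢; exact Real.sign_of_neg (by linarith)
    rw [habs, hsign, Real.rpow_def_of_pos hs]
    ring_nf
  have key := h5'.congr_of_eventuallyEq heq
  convert key using 1
  case e'_4 => rfl
  case e'_5 => rfl
  have habs : |x₁ t| = ε * x₁ t := by
    rcases hεcases with h | h
    · rw [h] at hA ⊢; rw [one_mul] at hA ⊢; exact abs_of_pos hA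
    · rw [h] at hA ⊢; rw [abs_of_neg (by linarith)]; ring
  have hexp : Real.exp ((ε * x₁ t) ^ β * Real.log (ε * x₁ t))
      = (ε * x₁ t) ^ ((ε * x₁ t) ^ β) := by
    rw [mul_comm]; exact (Real.rpow_def_of_pos hA _).symm
  simp only [Pi.mul_apply]
  rw [habs, h2, hexp]
  have hsub : (ε * x₁ t) ^ (β - 1) = (ε * x₁ t) ^ β / (ε * x₁ t) := by
    rw [Real.rpow_sub hA, Real.rpow_one]
  have hadd : (ε * x₁ t) ^ ((ε * x₁ t) ^ β + β - 1)
      = (ε * x₁ t) ^ ((ε * x₁ t) ^ β) * (ε * x₁ t) ^ (β - 1) := by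
    rw [← Real.rpow_add hA]; ring_nf
  have hd : (ε * x₁ t) ^ β * (ε * x₁' / (ε * x₁ t))
      = (ε * x₁ t) ^ (β - 1) * (ε * x₁') := by
    rw [hsub]; field_simp
  rw [hadd, hd]
  linear_combination (-(K₁ * (ε * x₁ t) ^ ((ε * x₁ t) ^ β) * (ε * x₁ t) ^ (β - 1)
    * x₁' * (1 + β * Real.log (ε * x₁ t)))) * hεsq
end

section
/- Let β > 1, γ > 0, K₁ > 0, K₂ > 0 be real constants. Let x₁, x₂ : ℝ → ℝ be differentiable at a time t with x₁(t) ≠ 0 and z₂(t) ≠ 0, where z₂ = x₂ + K₁·sign(x₁)·|x₁|^(|x₁|^β), satisfying ẋ₁(t) = x₂(t) and ẋ₂(t) = u(t) with u = −K₂·sign(z₂)·|z₂|^(|z₂|^γ) − ( x₁ + K₁·|x₁|^(|x₁|^β + β − 1)·(1 + β·ln|x₁|)·(−K₁·sign(x₁)·|x₁|^(|x₁|^β) + z₂) ). Then the Lyapunov function V₂ = x₁²/2 + z₂²/2 is differentiable at t with derivative V̇₂(t) = −K₁·|x₁(t)|^(1 + |x₁(t)|^β) − K₂·|z₂(t)|^(1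 + |z₂(t)|^γ). In particular V̇₂(t) < 0. -/
open Real

lemma tower_deriv (β c : ℝ) (hc : 0 < c) :
    HasDerivAt (fun y : ℝ => y ^ (y ^ β))
      (c ^ (c ^ β + β - 1) * (1 + β * Real.log c)) c := by
  have hlog : HasDerivAt Real.log c⁻¹ c := Real.hasDerivAt_log hc.ne'
  have hpow : HasDerivAt (fun y : ℝ => y ^ β) (β * c ^ (β - 1)) c :=
    Real.hasDerivAt_rpow_const (Or.inl hc.ne')
  have hh : HasDerivAt (fun y : ℝ => Real.log y * y ^ β)
      (c⁻¹ * c ^ β + Real.log c * (β * c ^ (β - 1))) c := hlog.mul hpow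
  have hexp := hh.exp
  have heq : (fun y : ℝ => Real.exp (Real.log y * y ^ β)) =ᶠ[nhds c]
      (fun y : ℝ => y ^ (y ^ β)) := by
    filter_upwards [eventually_gt_nhds hc] with y hy
    rw [show y ^ (y ^ β) = Real.exp (Real.log y * y ^ β) from Real.rpow_def_of_pos hy _]
  have := hexp.congr_of_eventuallyEq heq.symm
  refine this.congr_deriv ?_
  have h1 : c ^ (c ^ β + β - 1) = c ^ (c ^ β) * c ^ (β - 1) := by
    rw [← Real.rpow_add hc]; ring_nf
  have h2 : Real.exp (Real.log c * c ^ β) = c ^ (c ^ β) :=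
    (Real.rpow_def_of_pos hc _).symm
  have h3 : c⁻¹ * c ^ β = c ^ (β - 1) := by
    rw [Real.rpow_sub hc, Real.rpow_one]; field_simp
  rw [h2, h1, ← h3]; ring

lemma sign_tower_deriv (β c : ℝ) (hc : c ≠ 0) :
    HasDerivAt (fun y : ℝ => Real.sign y * |y| ^ (|y| ^ β))
      (|c| ^ (|c| ^ β + β - 1) * (1 + β * Real.log |c|)) c := by
  rcases hc.lt_or_gt with h | h
  · -- c < 0
    have hpos : 0 < -c := by linarith
    have base := tower_deriv β (-c) hpos
    have hneg : HasDerivAt (fun y : ℝ => -y) (-1 : ℝ) c := (hasDerivAt_id c).neg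
    have comp := base.comp c hneg
    have comp2 := comp.neg
    -- comp2 : HasDerivAt (fun y => -((-y) ^ ((-y) ^ β))) (-(... * -1)) c
    have heq : (fun y : ℝ => -((-y) ^ ((-y) ^ β))) =ᶠ[nhds c]
        (fun y : ℝ => Real.sign y * |y| ^ (|y| ^ β)) := by
      filter_upwards [eventually_lt_nhds h] with y hy
      rw [Real.sign_of_neg hy, abs_of_neg hy]; ring
    have := comp2.congr_of_eventuallyEq heq.symm
    refine this.congr_deriv ?_
    rw [abs_of_neg h]; ring
  · have base := tower_deriv β c h
    have heq : (fun y : ℝ => y ^ (y ^ β)) =ᶠ[nhds c]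
        (fun y : ℝ => Real.sign y * |y| ^ (|y| ^ β)) := by
      filter_upwards [eventually_gt_nhds h] with y hy
      rw [Real.sign_of_pos hy, abs_of_pos hy, one_mul]
    have := base.congr_of_eventuallyEq heq.symm
    refine this.congr_deriv ?_; rw [abs_of_pos h]

/-- Theorem 1 (Lyapunov computation): along the double integrator ẋ₁ = x₂, ẋ₂ = u
with the power tower backstepping control u, the Lyapunov function
V₂ = x₁²/2 + z₂²/2 satisfies V̇₂ = −K₁·|x₁|^(1+|x₁|^β) − K₂·|z₂|^(1+|z₂|^γ) < 0. -/
theorem powerTower_V2_deriv (β γ K₁ K₂ : ℝ) (hβ : 1 < β) (hγ : 0 < γ)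
    (hK₁ : 0 < K₁) (hK₂ : 0 < K₂)
    (x₁ x₂ : ℝ → ℝ) (t x₁' x₂' : ℝ)
    (hx₁ : HasDerivAt x₁ x₁' t) (hx₂ : HasDerivAt x₂ x₂' t)
    (z₂ : ℝ → ℝ)
    (hz₂ : z₂ = fun s : ℝ => x₂ s + K₁ * Real.sign (x₁ s) * |x₁ s| ^ (|x₁ s| ^ β))
    (hne1 : x₁ t ≠ 0) (hne2 : z₂ t ≠ 0)
    (h1 : x₁' = x₂ t)
    (h2 : x₂' = -K₂ * Real.sign (z₂ t) * |z₂ t| ^ (|z₂ t| ^ γ) -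
      (x₁ t + K₁ * |x₁ t| ^ (|x₁ t| ^ β + β - 1) * (1 + β * Real.log |x₁ t|) *
        (-K₁ * Real.sign (x₁ t) * |x₁ t| ^ (|x₁ t| ^ β) + z₂ t))) :
    HasDerivAt (fun s : ℝ => x₁ s ^ 2 / 2 + z₂ s ^ 2 / 2)
      (-K₁ * |x₁ t| ^ (1 + |x₁ t| ^ β) - K₂ * |z₂ t| ^ (1 + |z₂ t| ^ γ)) t ∧
    -K₁ * |x₁ t| ^ (1 + |x₁ t| ^ β) - K₂ * |z₂ t| ^ (1 + |z₂ t| ^ γ) < 0 := by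
  set A : ℝ := |x₁ t| ^ (|x₁ t| ^ β + β - 1) * (1 + β * Real.log |x₁ t|) with hA
  have hinner : HasDerivAt (fun s : ℝ => Real.sign (x₁ s) * |x₁ s| ^ (|x₁ s| ^ β))
      (A * x₁') t := (sign_tower_deriv β (x₁ t) hne1).comp t hx₁
  have hz₂' : HasDerivAt z₂ (x₂' + K₁ * (A * x₁')) t := by
    rw [hz₂]
    exact hx₂.add (by simpa [mul_assoc] using hinner.const_mul K₁)
  have hV : HasDerivAt (fun s : ℝ => x₁ s ^ 2 / 2 + z₂ s ^ 2 / 2)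
      (x₁ t * x₁' + z₂ t * (x₂' + K₁ * (A * x₁'))) t := by
    have p1 : HasDerivAt (fun s : ℝ => x₁ s ^ 2 / 2) (x₁ t * x₁') t := by
      have := (hx₁.pow 2).div_const 2
      refine this.congr_deriv ?_; ring
    have p2 : HasDerivAt (fun s : ℝ => z₂ s ^ 2 / 2) (z₂ t * (x₂' + K₁ * (A * x₁'))) t := by
      have := (hz₂'.pow 2).div_const 2
      refine this.congr_deriv ?_; ring
    exact p1.add p2
  have habs1 : x₁ t * Real.sign (x₁ t) = |x₁ t| := by
    rcases hne1.lt_or_gt with h | h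
    · rw [Real.sign_of_neg h, abs_of_neg h]; ring
    · rw [Real.sign_of_pos h, abs_of_pos h]; ring
  have habs2 : z₂ t * Real.sign (z₂ t) = |z₂ t| := by
    rcases hne2.lt_or_gt with h | h
    · rw [Real.sign_of_neg h, abs_of_neg h]; ring
    · rw [Real.sign_of_pos h, abs_of_pos h]; ring
  have hr1 : |x₁ t| ^ (1 + |x₁ t| ^ β) = |x₁ t| * |x₁ t| ^ (|x₁ t| ^ β) := by
    rw [Real.rpow_add (abs_pos.2 hne1), Real.rpow_one]
  have hr2 : |z₂ t| ^ (1 + |z₂ t| ^ γ) = |z₂ t| * |z₂ t| ^ (|z₂ t| ^ γ) := by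
    rw [Real.rpow_add (abs_pos.2 hne2), Real.rpow_one]
  have hx2t : x₂ t = z₂ t - K₁ * Real.sign (x₁ t) * |x₁ t| ^ (|x₁ t| ^ β) := by
    rw [hz₂]; ring
  have hval : x₁ t * x₁' + z₂ t * (x₂' + K₁ * (A * x₁')) =
      -K₁ * |x₁ t| ^ (1 + |x₁ t| ^ β) - K₂ * |z₂ t| ^ (1 + |z₂ t| ^ γ) := by
    rw [h1, h2, hx2t, hr1, hr2]
    linear_combination (-(K₁ * |x₁ t| ^ (|x₁ t| ^ β))) * habs1 -
      (K₂ * |z₂ t| ^ (|z₂ t| ^ γ)) * habs2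
  constructor
  · rw [← hval]; exact hV
  · have t1 : 0 < K₁ * |x₁ t| ^ (1 + |x₁ t| ^ β) :=
      mul_pos hK₁ (Real.rpow_pos_of_pos (abs_pos.2 hne1) _)
    have t2 : 0 < K₂ * |z₂ t| ^ (1 + |z₂ t| ^ γ) :=
      mul_pos hK₂ (Real.rpow_pos_of_pos (abs_pos.2 hne2) _)
    linarith
end

section
/- Let β > 1, γ > 0, K₁ > 0, K₂ > 0. For any continuously differentiable solution (x₁, x₂) : [0,∞) → ℝ² of the closed-loop double integrator ẋ₁ = x₂, ẋ₂ = u with d = 0 and u = −K₂·sign(z₂)·|z₂|^(|z₂|^γ) − ( x₁ + K₁·|x₁|^(|x₁|^β + β − 1)·(1 + β·ln|x₁|)·(−K₁·sign(x₁)·|x₁|^(|x₁|^β) + z₂) ), where z₂ = x₂ + K₁·sign(x₁)·|x₁|^(|x₁|^β), there exists a finite time T ≥ 0 such that x₁(t) = 0 and x₂(t) = 0 for all t ≥ T. -/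
/-- Backstepping error z₂ = x₂ + K₁·sign(x₁)·|x₁|^(|x₁|^β). -/
noncomputable def ptError (β K₁ : ℝ) (x₁ x₂ : ℝ → ℝ) (t : ℝ) : ℝ :=
  x₂ t + K₁ * Real.sign (x₁ t) * |x₁ t| ^ (|x₁ t| ^ β)

/-- Power tower backstepping control law (Theorem 1, d = 0). -/
noncomputable def ptControl (β γ K₁ K₂ : ℝ) (x₁ x₂ : ℝ → ℝ) (t : ℝ) : ℝ :=
  -K₂ * Real.sign (ptError β K₁ x₁ x₂ t) *
      |ptError β K₁ x₁ x₂ t| ^ (|ptError β K₁ x₁ x₂ t| ^ γ) -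
    (x₁ t + K₁ * |x₁ t| ^ (|x₁ t| ^ β + β - 1) * (1 + β * Real.log |x₁ t|) *
      (-K₁ * Real.sign (x₁ t) * |x₁ t| ^ (|x₁ t| ^ β) + ptError β K₁ x₁ x₂ t))


open Real Filter Set Topology

lemma rpow_self_eq_exp {y : ℝ} (hy : 0 < y) (p : ℝ) :
    y ^ p = Real.exp (p * Real.log y) := by
  rw [← Real.exp_log (Real.rpow_pos_of_pos hy p), Real.log_rpow hy]

lemma hasDerivAt_towerPos {β : ℝ} {s : ℝ} (hs : 0 < s) :
    HasDerivAt (fun y : ℝ => y ^ (y ^ β))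
      (s ^ (s ^ β + β - 1) * (1 + β * Real.log s)) s := by
  have hlog : HasDerivAt (fun y : ℝ => y ^ β * Real.log y)
      (β * s ^ (β - 1) * Real.log s + s ^ β * s⁻¹) s := by
    have h1 : HasDerivAt (fun y : ℝ => y ^ β) (β * s ^ (β - 1)) s := by
      simpa [mul_comm] using (Real.hasDerivAt_rpow_const (p := β) (Or.inl hs.ne'))
    have h2 : HasDerivAt Real.log s⁻¹ s := Real.hasDerivAt_log hs.ne'
    exact (h1.mul h2).congr_deriv (by ring)
  have hexp := hlog.exp
  have heq : (fun y : ℝ => Real.exp (y ^ β * Real.log y)) =ᶠ[nhds s]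
      (fun y : ℝ => y ^ (y ^ β)) := by
    filter_upwards [eventually_gt_nhds hs] with y hy
    conv_rhs => rw [rpow_self_eq_exp hy]
  have hd := heq.hasDerivAt_iff.mp hexp
  refine hd.congr_deriv ?_
  have h3 : s ^ β * s⁻¹ = s ^ (β - 1) := by
    rw [Real.rpow_sub_one hs.ne', div_eq_mul_inv]
  have h4 : s ^ (s ^ β + β - 1) = s ^ (s ^ β) * s ^ (β - 1) := by
    rw [← Real.rpow_add hs, add_sub_assoc]
  rw [h4, ← Real.exp_log (Real.rpow_pos_of_pos hs (s ^ β)), Real.log_rpow hs, h3]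
  ring

lemma tower_odd (β : ℝ) (y : ℝ) :
    Real.sign (-y) * |(-y)| ^ (|(-y)| ^ β) = -(Real.sign y * |y| ^ (|y| ^ β)) := by
  rw [Real.sign_neg, abs_neg]; ring

lemma hasDerivAt_signTower {β : ℝ} {s : ℝ} (hs : s ≠ 0) :
    HasDerivAt (fun y : ℝ => Real.sign y * |y| ^ (|y| ^ β))
      (|s| ^ (|s| ^ β + β - 1) * (1 + β * Real.log |s|)) s := by
  rcases hs.lt_or_gt with h | h
  · -- s < 0
    have hpos : 0 < -s := by linarith
    have hd := hasDerivAt_towerPos (β := β) hpos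
    have hcomp : HasDerivAt (fun y : ℝ => -((-y) ^ ((-y) ^ β)))
        ((-s) ^ ((-s) ^ β + β - 1) * (1 + β * Real.log (-s))) s := by
      have := ((hd.comp s (hasDerivAt_neg s))).neg
      exact this.congr_deriv (by ring)
    have heq : (fun y : ℝ => -((-y) ^ ((-y) ^ β))) =ᶠ[nhds s]
        (fun y : ℝ => Real.sign y * |y| ^ (|y| ^ β)) := by
      filter_upwards [eventually_lt_nhds h] with y hy
      have h1 : Real.sign y = -1 := Real.sign_of_neg hy
      have h2 : |y| = -y := abs_of_neg hy
      rw [h1, h2]; ring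
    have := heq.hasDerivAt_iff.mp hcomp
    rwa [show |s| = -s from abs_of_neg h]
  · have hd := hasDerivAt_towerPos (β := β) h
    have heq : (fun y : ℝ => y ^ (y ^ β)) =ᶠ[nhds s]
        (fun y : ℝ => Real.sign y * |y| ^ (|y| ^ β)) := by
      filter_upwards [eventually_gt_nhds h] with y hy
      rw [Real.sign_of_pos hy, abs_of_pos hy, one_mul]
    have := heq.hasDerivAt_iff.mp hd
    rwa [show |s| = s from abs_of_pos h]

lemma tendsto_abs_punctured : Tendsto (fun s : ℝ => |s|) (nhdsWithin 0 {x | x ≠ 0}) (nhdsWithin 0 (Set.Ioi 0)) := by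
  rw [tendsto_nhdsWithin_iff]
  constructor
  · exact (continuous_abs.tendsto' 0 0 abs_zero).mono_left nhdsWithin_le_nhds
  · filter_upwards [self_mem_nhdsWithin] with s hs
    exact abs_pos.mpr hs

lemma tendsto_log_mul_abs_rpow {p : ℝ} (hp : 0 < p) :
    Tendsto (fun s : ℝ => Real.log |s| * |s| ^ p) (nhdsWithin 0 {x | x ≠ 0}) (nhds 0) :=
  (tendsto_log_mul_rpow_nhdsGT_zero hp).comp tendsto_abs_punctured

lemma tendsto_abs_rpow_zero {p : ℝ} (hp : 0 < p) :
    Tendsto (fun s : ℝ => |s| ^ p) (nhdsWithin 0 {x | x ≠ 0}) (nhds 0) := by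
  have h : Tendsto (fun u : ℝ => u ^ p) (nhds 0) (nhds 0) := by
    have := (Real.continuousAt_rpow_const 0 p (Or.inr hp.le)).tendsto
    rwa [Real.zero_rpow hp.ne'] at this
  exact (h.comp (tendsto_abs_punctured.mono_right nhdsWithin_le_nhds))

lemma tendsto_tower_one {p : ℝ} (hp : 0 < p) :
    Tendsto (fun s : ℝ => |s| ^ (|s| ^ p)) (nhdsWithin 0 {x | x ≠ 0}) (nhds 1) := by
  have h0 : Tendsto (fun s : ℝ => Real.exp (|s| ^ p * Real.log |s|)) (nhdsWithin 0 {x | x ≠ 0}) (nhds 1) := by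
    have := (Real.continuous_exp.tendsto 0).comp
      (((tendsto_log_mul_abs_rpow hp).congr (fun s => mul_comm _ _)))
    rw [Real.exp_zero] at this; exact this
  refine h0.congr' ?_
  filter_upwards [self_mem_nhdsWithin] with s hs
  exact (rpow_self_eq_exp (abs_pos.mpr hs) _).symm

lemma tendsto_towerDeriv_zero {β : ℝ} (hβ : 1 < β) :
    Tendsto (fun s : ℝ => |s| ^ (|s| ^ β + β - 1) * (1 + β * Real.log |s|))
      (nhdsWithin 0 {x | x ≠ 0}) (nhds 0) := by
  have hb1 : (0:ℝ) < β - 1 := by linarith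
  have key : Tendsto (fun s : ℝ => |s| ^ (|s| ^ β) *
      (|s| ^ (β - 1) + β * (Real.log |s| * |s| ^ (β - 1))))
      (nhdsWithin 0 {x | x ≠ 0}) (nhds 0) := by
    have := (tendsto_tower_one (lt_trans one_pos hβ)).mul
      (((tendsto_abs_rpow_zero hb1).add ((tendsto_log_mul_abs_rpow hb1).const_mul β)))
    simpa using this
  refine key.congr' ?_
  filter_upwards [self_mem_nhdsWithin] with s hs
  have habs : (0:ℝ) < |s| := abs_pos.mpr hs
  rw [show |s| ^ β + β - 1 = |s| ^ β + (β - 1) by ring, Real.rpow_add habs]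
  ring

lemma g_hasDerivAt {γ s : ℝ} (hs : 0 < s) :
    HasDerivAt (fun y : ℝ => y ^ γ * Real.log y)
      (s ^ (γ - 1) * (γ * Real.log s + 1)) s := by
  have h1 : HasDerivAt (fun y : ℝ => y ^ γ) (γ * s ^ (γ - 1)) s := by
    simpa [mul_comm] using (Real.hasDerivAt_rpow_const (p := γ) (Or.inl hs.ne'))
  have h2 : HasDerivAt Real.log s⁻¹ s := Real.hasDerivAt_log hs.ne'
  have := h1.mul h2
  refine this.congr_deriv ?_
  have h3 : s ^ γ * s⁻¹ = s ^ (γ - 1) := by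
    rw [Real.rpow_sub_one hs.ne', div_eq_mul_inv]
  rw [← h3]; ring

lemma g_continuousOn {γ : ℝ} : ContinuousOn (fun y : ℝ => y ^ γ * Real.log y) (Set.Ioi 0) :=
  fun s hs => ((g_hasDerivAt (γ := γ) hs).continuousAt).continuousWithinAt

lemma g_no_three {γ p q r : ℝ} (hγ : 0 < γ) (hp : 0 < p) (hpq : p < q) (hqr : q < r)
    (h1 : p ^ γ * Real.log p = q ^ γ * Real.log q)
    (h2 : q ^ γ * Real.log q = r ^ γ * Real.log r) : False := by
  set g : ℝ → ℝ := fun y => y ^ γ * Real.log y with hg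
  set m : ℝ := Real.exp (-1/γ) with hm
  have hm0 : 0 < m := Real.exp_pos _
  have hanti : StrictAntiOn g (Set.Ioc 0 m) := by
    apply strictAntiOn_of_deriv_neg (convex_Ioc 0 m)
    · exact g_continuousOn.mono (fun y hy => hy.1)
    · intro s hs
      rw [interior_Ioc] at hs
      rw [(g_hasDerivAt hs.1).deriv]
      have hlog : Real.log s < -1/γ := by
        calc Real.log s < Real.log m := Real.log_lt_log hs.1 hs.2
        _ = -1/γ := Real.log_exp _
      have : γ * Real.log s + 1 < 0 := by
        have h' : γ * (-1/γ) = -1 := by field_simp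
        nlinarith [(mul_lt_mul_iff_right₀ hγ).mpr hlog]
      exact mul_neg_of_pos_of_neg (Real.rpow_pos_of_pos hs.1 _) this
  have hmono : StrictMonoOn g (Set.Ici m) := by
    apply strictMonoOn_of_deriv_pos (convex_Ici m)
    · exact g_continuousOn.mono (fun y hy => lt_of_lt_of_le hm0 hy)
    · intro s hs
      rw [interior_Ici] at hs
      have hs0 : 0 < s := lt_trans hm0 hs
      rw [(g_hasDerivAt hs0).deriv]
      have hlog : -1/γ < Real.log s := by
        calc (-1:ℝ)/γ = Real.log m := (Real.log_exp _).symm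
        _ < Real.log s := Real.log_lt_log hm0 hs
      have : 0 < γ * Real.log s + 1 := by
        have h' : γ * (-1/γ) = -1 := by field_simp
        nlinarith [(mul_lt_mul_iff_right₀ hγ).mpr hlog]
      exact mul_pos (Real.rpow_pos_of_pos hs0 _) this
  rcases le_or_gt q m with h | h
  · have := hanti ⟨hp, le_of_lt (lt_of_lt_of_le hpq h)⟩ ⟨lt_trans hp hpq, h⟩ hpq
    rw [hg] at this; simp only at this
    exact absurd h1 (ne_of_gt this)
  · have := hmono (le_of_lt h) (le_of_lt (lt_trans h hqr)) hqr
    rw [hg] at this; simp only at this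
    exact absurd h2 (ne_of_lt this)

lemma tower_log_eq {γ p q : ℝ} (hp : 0 < p) (hq : 0 < q)
    (h : p ^ (p ^ γ) = q ^ (q ^ γ)) : p ^ γ * Real.log p = q ^ γ * Real.log q := by
  have := congrArg Real.log h
  rwa [Real.log_rpow hp, Real.log_rpow hq] at this

lemma tower_eq_one {γ p : ℝ} (hγ : 0 < γ) (hp : 0 < p) (h : p ^ (p ^ γ) = 1) : p = 1 := by
  have h2 : p ^ γ * Real.log p = 0 := by
    have := congrArg Real.log h
    rwa [Real.log_rpow hp, Real.log_one] at this
  have hne : p ^ γ ≠ 0 := ne_of_gt (Real.rpow_pos_of_pos hp _)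
  have : Real.log p = 0 := by
    rcases mul_eq_zero.mp h2 with h | h
    · exact absurd h hne
    · exact h
  exact Real.log_injOn_pos (Set.mem_Ioi.mpr hp) (by simp) (by rw [this, Real.log_one])

lemma psi_triple_pos {γ K₁ a : ℝ} (hγ : 0 < γ) (hK : 0 < K₁) (ha : 0 < a)
    (hR : Real.sign (a+K₁) * |a+K₁| ^ (|a+K₁| ^ γ) = Real.sign a * |a| ^ (|a| ^ γ) ∨
      (a + K₁ = 0 ∧ |a| ^ (|a| ^ γ) = 1))
    (hL : Real.sign (a-K₁) * |a-K₁| ^ (|a-K₁| ^ γ) = Real.sign a * |a| ^ (|a| ^ γ) ∨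
      (a - K₁ = 0 ∧ |a| ^ (|a| ^ γ) = 1)) : False := by
  have haK : 0 < a + K₁ := by linarith
  have hsa : Real.sign a = 1 := Real.sign_of_pos ha
  have hsaK : Real.sign (a + K₁) = 1 := Real.sign_of_pos haK
  have habsa : |a| = a := abs_of_pos ha
  have habsaK : |a + K₁| = a + K₁ := abs_of_pos haK
  -- hR cannot be the corner case
  have hR' : (a+K₁) ^ ((a+K₁) ^ γ) = a ^ (a ^ γ) := by
    rcases hR with h | h
    · rwa [hsa, hsaK, habsa, habsaK, one_mul, one_mul] at h
    · linarith [h.1]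
  rcases hL with h | h
  · -- a - K₁ ≠ 0 case needs: sign analysis
    rcases lt_trichotomy (a - K₁) 0 with hlt | heq | hgt
    · rw [Real.sign_of_neg hlt, hsa, habsa, neg_one_mul, one_mul] at h
      have h1 : (0:ℝ) < |a - K₁| ^ (|a - K₁| ^ γ) := Real.rpow_pos_of_pos (abs_pos.mpr (ne_of_lt hlt)) _
      have h2 : (0:ℝ) < a ^ (a ^ γ) := Real.rpow_pos_of_pos ha _
      linarith
    · rw [heq] at h
      simp only [Real.sign_zero, zero_mul] at h
      have h2 : (0:ℝ) < a ^ (a ^ γ) := Real.rpow_pos_of_pos ha _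
      rw [hsa, habsa, one_mul] at h
      linarith
    · rw [Real.sign_of_pos hgt, hsa, habsa, abs_of_pos hgt, one_mul, one_mul] at h
      exact g_no_three hγ hgt (by linarith) (by linarith)
        (tower_log_eq hgt ha h) (tower_log_eq ha haK hR'.symm)
  · -- corner: a = K₁, so a = 1
    have ha1 : a = 1 := by
      rw [habsa] at h
      exact tower_eq_one hγ ha h.2
    have hK1 : K₁ = 1 := by linarith [h.1]
    rw [ha1, hK1] at hR'
    norm_num at hR'
    have := tower_eq_one hγ (by norm_num : (0:ℝ) < 2) (by
      rw [show ((2:ℝ)^(2:ℝ)^γ) = (1:ℝ) from hR'])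
    norm_num at this

lemma psi_triple {γ K₁ a : ℝ} (hγ : 0 < γ) (hK : 0 < K₁) (ha : a ≠ 0)
    (hR : Real.sign (a+K₁) * |a+K₁| ^ (|a+K₁| ^ γ) = Real.sign a * |a| ^ (|a| ^ γ) ∨
      (a + K₁ = 0 ∧ |a| ^ (|a| ^ γ) = 1))
    (hL : Real.sign (a-K₁) * |a-K₁| ^ (|a-K₁| ^ γ) = Real.sign a * |a| ^ (|a| ^ γ) ∨
      (a - K₁ = 0 ∧ |a| ^ (|a| ^ γ) = 1)) : False := by
  rcases ha.lt_or_gt with hneg | hpos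
  · apply psi_triple_pos hγ hK (a := -a) (by linarith)
    · rcases hL with h | h
      · left
        rw [show -a + K₁ = -(a - K₁) by ring, tower_odd γ (a - K₁), h, ← tower_odd γ a]
      · right
        exact ⟨by linarith [h.1], by rw [abs_neg]; exact h.2⟩
    · rcases hR with h | h
      · left
        rw [show -a - K₁ = -(a + K₁) by ring, tower_odd γ (a + K₁), h, ← tower_odd γ a]
      · right
        exact ⟨by linarith [h.1], by rw [abs_neg]; exact h.2⟩
  · exact psi_triple_pos hγ hK hpos hR hL

lemma self_mul_sign' (x : ℝ) : x * Real.sign x = |x| := by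
  rcases lt_trichotomy x 0 with h | h | h
  · rw [Real.sign_of_neg h, abs_of_neg h]; ring
  · simp [h]
  · rw [Real.sign_of_pos h, abs_of_pos h]; ring

lemma tower_lower {p s : ℝ} (hp : 0 < p) :
    Real.exp (-1/p) * |s| ≤ |s| * |s| ^ (|s| ^ p) := by
  rcases eq_or_ne s 0 with rfl | hs
  · simp
  have ha : 0 < |s| := abs_pos.mpr hs
  have key : Real.exp (-1/p) ≤ |s| ^ (|s| ^ p) := by
    rcases le_or_gt 1 |s| with h1 | h1
    · calc Real.exp (-1/p) ≤ Real.exp 0 := by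
            apply Real.exp_le_exp.mpr
            have : (0:ℝ) < 1/p := by positivity
            rw [neg_div]; linarith
      _ = 1 := Real.exp_zero
      _ ≤ |s| ^ (|s| ^ p) := Real.one_le_rpow h1 (Real.rpow_nonneg ha.le _)
    · rw [rpow_self_eq_exp ha]
      apply Real.exp_le_exp.mpr
      set t := |s| ^ p with htdef
      have ht0 : 0 < t := Real.rpow_pos_of_pos ha _
      have hlog : Real.log |s| = Real.log t / p := by
        rw [htdef, Real.log_rpow ha]
        field_simp
      rw [hlog]
      have htlog : -1 ≤ t * Real.log t := by
        have := Real.log_le_sub_one_of_pos (x := t⁻¹) (by positivity)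
        rw [Real.log_inv] at this
        have h2 : t * (-Real.log t) ≤ t * (t⁻¹ - 1) := by
          exact mul_le_mul_of_nonneg_left this ht0.le
        rw [mul_sub, mul_inv_cancel₀ ht0.ne'] at h2
        nlinarith
      have e : t * (Real.log t / p) = (t * Real.log t) / p := by ring
      rw [e]
      exact (div_le_div_iff_of_pos_right hp).mpr htlog
  calc Real.exp (-1/p) * |s| ≤ |s| ^ (|s| ^ p) * |s| := by
        apply mul_le_mul_of_nonneg_right key ha.le
  _ = |s| * |s| ^ (|s| ^ p) := mul_comm _ _

lemma zDeriv {β γ K₁ K₂ : ℝ} (x₁ x₂ : ℝ → ℝ) {t : ℝ}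
    (hx : x₁ t ≠ 0)
    (h1 : HasDerivAt x₁ (x₂ t) t)
    (h2 : HasDerivAt x₂ (ptControl β γ K₁ K₂ x₁ x₂ t) t) :
    HasDerivAt (ptError β K₁ x₁ x₂)
      (-K₂ * Real.sign (ptError β K₁ x₁ x₂ t) * |ptError β K₁ x₁ x₂ t| ^
        (|ptError β K₁ x₁ x₂ t| ^ γ) - x₁ t) t := by
  have h3 : HasDerivAt (fun τ => Real.sign (x₁ τ) * |x₁ τ| ^ (|x₁ τ| ^ β))
      ((|x₁ t| ^ (|x₁ t| ^ β + β - 1) * (1 + β * Real.log |x₁ t|)) * x₂ t) t :=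
    (hasDerivAt_signTower hx).comp t h1
  have h4 := h2.add (h3.const_mul K₁)
  have hfun : (fun τ => x₂ τ + K₁ * (Real.sign (x₁ τ) * |x₁ τ| ^ (|x₁ τ| ^ β))) =
      ptError β K₁ x₁ x₂ := by
    funext τ; simp only [ptError]; ring
  rw [← hfun]
  refine h4.congr_deriv ?_
  simp only [ptControl, ptError]
  ring

lemma QDeriv {β γ K₁ K₂ : ℝ} (x₁ x₂ : ℝ → ℝ) {t : ℝ}
    (hx : x₁ t ≠ 0)
    (h1 : HasDerivAt x₁ (x₂ t) t)
    (h2 : HasDerivAt x₂ (ptControl β γ K₁ K₂ x₁ x₂ t) t) :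
    HasDerivAt (fun τ => (x₁ τ)^2 + (ptError β K₁ x₁ x₂ τ)^2)
      (-2 * (K₁ * (|x₁ t| * |x₁ t| ^ (|x₁ t| ^ β)) +
             K₂ * (|ptError β K₁ x₁ x₂ t| * |ptError β K₁ x₁ x₂ t| ^
               (|ptError β K₁ x₁ x₂ t| ^ γ)))) t := by
  have hz := zDeriv (γ := γ) (K₂ := K₂) x₁ x₂ hx h1 h2
  have h5 := (h1.pow 2).add (hz.pow 2)
  refine h5.congr_deriv ?_
  have e1 : x₁ t * Real.sign (x₁ t) = |x₁ t| := self_mul_sign' _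
  have e2 : ptError β K₁ x₁ x₂ t * Real.sign (ptError β K₁ x₁ x₂ t) =
      |ptError β K₁ x₁ x₂ t| := self_mul_sign' _
  have hx2 : x₂ t = ptError β K₁ x₁ x₂ t -
      K₁ * Real.sign (x₁ t) * |x₁ t| ^ (|x₁ t| ^ β) := by
    simp only [ptError]; ring
  rw [hx2]
  set A := |x₁ t| ^ (|x₁ t| ^ β) with hA
  set B := |ptError β K₁ x₁ x₂ t| ^ (|ptError β K₁ x₁ x₂ t| ^ γ) with hB
  set a1 := |x₁ t| with ha1
  set a2 := |ptError β K₁ x₁ x₂ t| with ha2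
  rw [← e1, ← e2]
  push_cast
  ring

lemma sqrt_sq_add_sq_le (a b : ℝ) : Real.sqrt (a^2 + b^2) ≤ |a| + |b| := by
  rw [show a^2 + b^2 = |a|^2 + |b|^2 by rw [sq_abs, sq_abs]]
  have h : |a|^2 + |b|^2 ≤ (|a| + |b|)^2 := by nlinarith [abs_nonneg a, abs_nonneg b]
  calc Real.sqrt (|a|^2 + |b|^2) ≤ Real.sqrt ((|a| + |b|)^2) := Real.sqrt_le_sqrt h
  _ = |a| + |b| := Real.sqrt_sq (by positivity)

lemma sub_le_of_hasDerivAt_le {f f' : ℝ → ℝ} {c a b : ℝ} (hab : a ≤ b)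
    (hd : ∀ t ∈ Set.Icc a b, HasDerivAt f (f' t) t)
    (hb : ∀ t ∈ Set.Ioo a b, f' t ≤ c) :
    f b - f a ≤ c * (b - a) := by
  set g : ℝ → ℝ := fun t => f t - c * t with hg
  have hganti : AntitoneOn g (Set.Icc a b) := by
    apply antitoneOn_of_deriv_nonpos (convex_Icc a b)
    · exact fun t ht => ((hd t ht).continuousAt).continuousWithinAt.sub
        (((continuous_const.mul continuous_id).continuousOn (s := Set.Icc a b)) t ht)
    · intro t ht
      rw [interior_Icc] at ht
      exact (((hd t ⟨ht.1.le, ht.2.le⟩).sub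
        ((hasDerivAt_id t).const_mul c)).differentiableAt).differentiableWithinAt
    · intro t ht
      rw [interior_Icc] at ht
      have hder : HasDerivAt g (f' t - c) t := by
        have := (hd t ⟨ht.1.le, ht.2.le⟩).sub ((hasDerivAt_id t).const_mul c)
        exact this.congr_deriv (by ring)
      rw [hder.deriv]
      linarith [hb t ht]
  have := hganti ⟨le_refl a, hab⟩ ⟨hab, le_refl b⟩ hab
  simp only [hg] at this
  linarith

lemma Wderiv_le {β γ K₁ K₂ : ℝ} (hβ : 1 < β) (hγ : 0 < γ) (hK₁ : 0 < K₁) (hK₂ : 0 < K₂)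
    (x₁ x₂ : ℝ → ℝ) {t : ℝ} (hx : x₁ t ≠ 0)
    (h1 : HasDerivAt x₁ (x₂ t) t)
    (h2 : HasDerivAt x₂ (ptControl β γ K₁ K₂ x₁ x₂ t) t) :
    HasDerivAt (fun τ => Real.sqrt ((x₁ τ)^2 + (ptError β K₁ x₁ x₂ τ)^2))
      (1 / (2 * Real.sqrt ((x₁ t)^2 + (ptError β K₁ x₁ x₂ t)^2)) *
        (-2 * (K₁ * (|x₁ t| * |x₁ t| ^ (|x₁ t| ^ β)) +
          K₂ * (|ptError β K₁ x₁ x₂ t| * |ptError β K₁ x₁ x₂ t| ^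
            (|ptError β K₁ x₁ x₂ t| ^ γ))))) t ∧
    1 / (2 * Real.sqrt ((x₁ t)^2 + (ptError β K₁ x₁ x₂ t)^2)) *
        (-2 * (K₁ * (|x₁ t| * |x₁ t| ^ (|x₁ t| ^ β)) +
          K₂ * (|ptError β K₁ x₁ x₂ t| * |ptError β K₁ x₁ x₂ t| ^
            (|ptError β K₁ x₁ x₂ t| ^ γ)))) ≤
      -(min (K₁ * Real.exp (-1/β)) (K₂ * Real.exp (-1/γ))) := by
  have hQ := QDeriv (γ := γ) (K₂ := K₂) x₁ x₂ hx h1 h2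
  have hQpos : 0 < (x₁ t)^2 + (ptError β K₁ x₁ x₂ t)^2 := by
    have := sq_nonneg (ptError β K₁ x₁ x₂ t)
    have h0 : 0 < (x₁ t)^2 := by positivity
    linarith
  constructor
  · exact (Real.hasDerivAt_sqrt hQpos.ne').comp t hQ
  · set c := min (K₁ * Real.exp (-1/β)) (K₂ * Real.exp (-1/γ)) with hc
    have hcpos : 0 < c := lt_min (by positivity) (by positivity)
    set W := Real.sqrt ((x₁ t)^2 + (ptError β K₁ x₁ x₂ t)^2) with hW
    have hWpos : 0 < W := Real.sqrt_pos.mpr hQpos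
    have hbound : c * W ≤ K₁ * (|x₁ t| * |x₁ t| ^ (|x₁ t| ^ β)) +
        K₂ * (|ptError β K₁ x₁ x₂ t| * |ptError β K₁ x₁ x₂ t| ^
          (|ptError β K₁ x₁ x₂ t| ^ γ)) := by
      have t1 : K₁ * (Real.exp (-1/β) * |x₁ t|) ≤
          K₁ * (|x₁ t| * |x₁ t| ^ (|x₁ t| ^ β)) :=
        mul_le_mul_of_nonneg_left (tower_lower (by linarith)) hK₁.le
      have t2 : K₂ * (Real.exp (-1/γ) * |ptError β K₁ x₁ x₂ t|) ≤
          K₂ * (|ptError β K₁ x₁ x₂ t| * |ptError β K₁ x₁ x₂ t| ^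
            (|ptError β K₁ x₁ x₂ t| ^ γ)) :=
        mul_le_mul_of_nonneg_left (tower_lower hγ) hK₂.le
      have t3 : c * W ≤ c * (|x₁ t| + |ptError β K₁ x₁ x₂ t|) :=
        mul_le_mul_of_nonneg_left (sqrt_sq_add_sq_le _ _) hcpos.le
      have t4 : c ≤ K₁ * Real.exp (-1/β) := min_le_left _ _
      have t5 : c ≤ K₂ * Real.exp (-1/γ) := min_le_right _ _
      have habs1 : (0:ℝ) ≤ |x₁ t| := abs_nonneg _
      have habs2 : (0:ℝ) ≤ |ptError β K₁ x₁ x₂ t| := abs_nonneg _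
      nlinarith [mul_le_mul_of_nonneg_right t4 habs1, mul_le_mul_of_nonneg_right t5 habs2]
    rw [one_div, inv_mul_eq_div, div_le_iff₀ (by positivity)]
    nlinarith

lemma exists_x1_zero {β γ K₁ K₂ : ℝ} (hβ : 1 < β) (hγ : 0 < γ) (hK₁ : 0 < K₁) (hK₂ : 0 < K₂)
    (x₁ x₂ : ℝ → ℝ)
    (hode1 : ∀ t ≥ (0 : ℝ), HasDerivAt x₁ (x₂ t) t)
    (hode2 : ∀ t ≥ (0 : ℝ), HasDerivAt x₂ (ptControl β γ K₁ K₂ x₁ x₂ t) t) :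
    ∃ t : ℝ, 0 < t ∧ x₁ t = 0 := by
  by_contra hcon
  push_neg at hcon
  set c := min (K₁ * Real.exp (-1/β)) (K₂ * Real.exp (-1/γ)) with hc
  have hcpos : 0 < c := lt_min (by positivity) (by positivity)
  set W : ℝ → ℝ := fun τ => Real.sqrt ((x₁ τ)^2 + (ptError β K₁ x₁ x₂ τ)^2) with hWdef
  set D : ℝ → ℝ := fun τ => 1 / (2 * Real.sqrt ((x₁ τ)^2 + (ptError β K₁ x₁ x₂ τ)^2)) *
        (-2 * (K₁ * (|x₁ τ| * |x₁ τ| ^ (|x₁ τ| ^ β)) +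
          K₂ * (|ptError β K₁ x₁ x₂ τ| * |ptError β K₁ x₁ x₂ τ| ^
            (|ptError β K₁ x₁ x₂ τ| ^ γ)))) with hDdef
  have hkey : ∀ t : ℝ, 0 < t → HasDerivAt W (D t) t ∧ D t ≤ -c := by
    intro t ht
    exact Wderiv_le hβ hγ hK₁ hK₂ x₁ x₂ (hcon t ht) (hode1 t ht.le) (hode2 t ht.le)
  set T : ℝ := 1 + (W 1 + 1) / c with hT
  have hW1 : 0 ≤ W 1 := Real.sqrt_nonneg _
  have hT1 : 1 ≤ T := by
    have h8 : 0 ≤ (W 1 + 1)/c := by positivity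
    rw [hT]
    linarith
  have hle := sub_le_of_hasDerivAt_le (f := W) (f' := D) (c := -c) hT1
    (fun t ht => (hkey t (by linarith [ht.1])).1)
    (fun t ht => (hkey t (by linarith [ht.1])).2)
  have hWT : 0 ≤ W T := Real.sqrt_nonneg _
  have hTc : -c * (T - 1) = -(W 1 + 1) := by
    have h9 : T - 1 = (W 1 + 1)/c := by rw [hT]; ring
    rw [h9]
    field_simp
  rw [hTc] at hle
  linarith

lemma sign_near (x : ℝ → ℝ) {t₀ a : ℝ} (hd : HasDerivAt x a t₀) (hx0 : x t₀ = 0) (ha : a ≠ 0) :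
    (∀ᶠ t in nhdsWithin t₀ (Set.Ioi t₀), Real.sign (x t) = Real.sign a ∧ x t ≠ 0) ∧
    (∀ᶠ t in nhdsWithin t₀ (Set.Iio t₀), Real.sign (x t) = -Real.sign a ∧ x t ≠ 0) := by
  rw [hasDerivAt_iff_tendsto_slope] at hd
  have hxt : ∀ t : ℝ, t ≠ t₀ → x t = slope x t₀ t * (t - t₀) := by
    intro t ht
    rw [slope_def_field, hx0, sub_zero, div_mul_cancel₀]
    exact sub_ne_zero.mpr ht
  rcases ha.lt_or_gt with hneg | hpos
  · have hev : ∀ᶠ t in nhdsWithin t₀ {y | y ≠ t₀}, slope x t₀ t < 0 :=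
      hd.eventually (eventually_lt_nhds hneg)
    constructor
    · filter_upwards [hev.filter_mono (nhdsWithin_mono _ (fun y hy => ne_of_gt hy)),
        self_mem_nhdsWithin] with t hslope ht
      have hx : x t < 0 := by
        rw [hxt t (ne_of_gt ht)]
        exact mul_neg_of_neg_of_pos hslope (by simp at ht; linarith)
      exact ⟨by rw [Real.sign_of_neg hx, Real.sign_of_neg hneg], ne_of_lt hx⟩
    · filter_upwards [hev.filter_mono (nhdsWithin_mono _ (fun y hy => ne_of_lt hy)),
        self_mem_nhdsWithin] with t hslope ht
      have hx : 0 < x t := by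
        rw [hxt t (ne_of_lt ht)]
        exact mul_pos_of_neg_of_neg hslope (by simp at ht; linarith)
      exact ⟨by rw [Real.sign_of_pos hx, Real.sign_of_neg hneg]; ring, ne_of_gt hx⟩
  · have hev : ∀ᶠ t in nhdsWithin t₀ {y | y ≠ t₀}, 0 < slope x t₀ t :=
      hd.eventually (eventually_gt_nhds hpos)
    constructor
    · filter_upwards [hev.filter_mono (nhdsWithin_mono _ (fun y hy => ne_of_gt hy)),
        self_mem_nhdsWithin] with t hslope ht
      have hx : 0 < x t := by
        rw [hxt t (ne_of_gt ht)]
        exact mul_pos hslope (by simp at ht; linarith)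
      exact ⟨by rw [Real.sign_of_pos hx, Real.sign_of_pos hpos], ne_of_gt hx⟩
    · filter_upwards [hev.filter_mono (nhdsWithin_mono _ (fun y hy => ne_of_lt hy)),
        self_mem_nhdsWithin] with t hslope ht
      have hx : x t < 0 := by
        rw [hxt t (ne_of_lt ht)]
        exact mul_neg_of_pos_of_neg hslope (by simp at ht; linarith)
      exact ⟨by rw [Real.sign_of_neg hx, Real.sign_of_pos hpos], ne_of_lt hx⟩

lemma side_limit {β γ K₁ K₂ : ℝ} (hβ : 1 < β) (hγ : 0 < γ) (hK₁ : 0 < K₁) (hK₂ : 0 < K₂)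
    (x₁ x₂ : ℝ → ℝ) {t₀ a σ : ℝ} (l : Filter ℝ) [l.NeBot]
    (hl : l ≤ nhdsWithin t₀ {y | y ≠ t₀})
    (hx0 : x₁ t₀ = 0) (ha : x₂ t₀ = a) (hane : a ≠ 0)
    (hsign : ∀ᶠ t in l, Real.sign (x₁ t) = σ ∧ x₁ t ≠ 0)
    (hcont1 : ContinuousAt x₁ t₀) (hcont2 : ContinuousAt x₂ t₀)
    (hu : Filter.Tendsto (ptControl β γ K₁ K₂ x₁ x₂) l
      (nhds (-K₂ * (Real.sign a * |a| ^ (|a| ^ γ))))) :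
    (Real.sign (a + σ*K₁) * |a + σ*K₁| ^ (|a + σ*K₁| ^ γ) =
      Real.sign a * |a| ^ (|a| ^ γ)) ∨
    (a + σ*K₁ = 0 ∧ |a| ^ (|a| ^ γ) = 1) := by
  have hlt : l ≤ nhds t₀ := hl.trans nhdsWithin_le_nhds
  have hx₁0 : Filter.Tendsto x₁ l (nhdsWithin 0 {y | y ≠ 0}) := by
    rw [tendsto_nhdsWithin_iff]
    refine ⟨?_, hsign.mono fun t ht => ht.2⟩
    have := hcont1.tendsto.mono_left hlt
    rwa [hx0] at this
  have htower : Filter.Tendsto (fun t => |x₁ t| ^ (|x₁ t| ^ β)) l (nhds 1) :=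
    (tendsto_tower_one (lt_trans one_pos hβ)).comp hx₁0
  have hx1t : Filter.Tendsto x₁ l (nhds 0) := by
    have := hcont1.tendsto.mono_left hlt; rwa [hx0] at this
  have hx2t : Filter.Tendsto x₂ l (nhds a) := by
    have := hcont2.tendsto.mono_left hlt; rwa [ha] at this
  -- limit of z
  have hz : Filter.Tendsto (ptError β K₁ x₁ x₂) l (nhds (a + σ * K₁)) := by
    have h1 : Filter.Tendsto (fun t => x₂ t + K₁ * σ * |x₁ t| ^ (|x₁ t| ^ β)) l
        (nhds (a + K₁ * σ * 1)) := hx2t.add ((htower.const_mul (K₁ * σ)))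
    have h2 : (fun t => x₂ t + K₁ * σ * |x₁ t| ^ (|x₁ t| ^ β)) =ᶠ[l]
        ptError β K₁ x₁ x₂ := by
      filter_upwards [hsign] with t ht
      simp only [ptError, ← ht.1]
    have := h1.congr' h2
    convert this using 2
    ring
  -- limit of the non-switching part of the control
  have hterm : Filter.Tendsto
      (fun t => x₁ t + K₁ * |x₁ t| ^ (|x₁ t| ^ β + β - 1) * (1 + β * Real.log |x₁ t|) * x₂ t)
      l (nhds 0) := by
    have h1 : Filter.Tendsto
        (fun t => |x₁ t| ^ (|x₁ t| ^ β + β - 1) * (1 + β * Real.log |x₁ t|)) l (nhds 0) :=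
      (tendsto_towerDeriv_zero hβ).comp hx₁0
    have h2 := hx1t.add (((h1.const_mul K₁).mul hx2t))
    simp only [add_zero, mul_zero, zero_mul] at h2
    convert h2 using 2 with t
    ring
  -- limit of the switching term
  have hψ : Filter.Tendsto
      (fun t => Real.sign (ptError β K₁ x₁ x₂ t) * |ptError β K₁ x₁ x₂ t| ^
        (|ptError β K₁ x₁ x₂ t| ^ γ)) l (nhds (Real.sign a * |a| ^ (|a| ^ γ))) := by
    have hid : ∀ t, Real.sign (ptError β K₁ x₁ x₂ t) * |ptError β K₁ x₁ x₂ t| ^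
        (|ptError β K₁ x₁ x₂ t| ^ γ) =
        (-(ptControl β γ K₁ K₂ x₁ x₂ t) -
          (x₁ t + K₁ * |x₁ t| ^ (|x₁ t| ^ β + β - 1) * (1 + β * Real.log |x₁ t|) * x₂ t)) / K₂ := by
      intro t
      have hx2id : -K₁ * Real.sign (x₁ t) * |x₁ t| ^ (|x₁ t| ^ β) + ptError β K₁ x₁ x₂ t
          = x₂ t := by simp only [ptError]; ring
      rw [eq_div_iff hK₂.ne']
      simp only [ptControl, hx2id]
      ring
    have h1 := ((hu.neg.sub hterm)).div_const K₂
    have h2 : (-(-K₂ * (Real.sign a * |a| ^ (|a| ^ γ))) - 0) / K₂ =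
        Real.sign a * |a| ^ (|a| ^ γ) := by
      rw [sub_zero, neg_mul, neg_neg, mul_div_cancel_left₀ _ hK₂.ne']
    rw [h2] at h1
    exact h1.congr (fun t => (hid t).symm)
  rcases eq_or_ne (a + σ * K₁) 0 with hc | hc
  · right
    refine ⟨hc, ?_⟩
    have hLne : Real.sign a * |a| ^ (|a| ^ γ) ≠ 0 := by
      have h1 : |a| ^ (|a| ^ γ) > 0 := Real.rpow_pos_of_pos (abs_pos.mpr hane) _
      rcases hane.lt_or_gt with h | h
      · rw [Real.sign_of_neg h]; nlinarith
      · rw [Real.sign_of_pos h]; nlinarith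
    have hzne : ∀ᶠ t in l, ptError β K₁ x₁ x₂ t ≠ 0 := by
      have hne : ∀ᶠ y in nhds (Real.sign a * |a| ^ (|a| ^ γ)), y ≠ 0 :=
        IsOpen.eventually_mem isOpen_ne hLne
      filter_upwards [hψ.eventually hne] with t ht
      intro h0
      rw [h0] at ht
      simp at ht
    have hz0 : Filter.Tendsto (ptError β K₁ x₁ x₂) l (nhdsWithin 0 {y | y ≠ 0}) := by
      rw [tendsto_nhdsWithin_iff]
      exact ⟨by rwa [hc] at hz, hzne⟩
    have habs1 : Filter.Tendsto (fun t => |ptError β K₁ x₁ x₂ t| ^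
        (|ptError β K₁ x₁ x₂ t| ^ γ)) l (nhds 1) := (tendsto_tower_one hγ).comp hz0
    -- |ψ(z t)| = tower eventually
    have habs2 : Filter.Tendsto (fun t => |Real.sign (ptError β K₁ x₁ x₂ t) *
        |ptError β K₁ x₁ x₂ t| ^ (|ptError β K₁ x₁ x₂ t| ^ γ)|) l
        (nhds |Real.sign a * |a| ^ (|a| ^ γ)|) := hψ.abs
    have heq : (fun t => |Real.sign (ptError β K₁ x₁ x₂ t) *
        |ptError β K₁ x₁ x₂ t| ^ (|ptError β K₁ x₁ x₂ t| ^ γ)|) =ᶠ[l]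
        (fun t => |ptError β K₁ x₁ x₂ t| ^ (|ptError β K₁ x₁ x₂ t| ^ γ)) := by
      filter_upwards [hzne] with t ht
      rw [abs_mul]
      rcases (ht).lt_or_gt with h | h
      · rw [Real.sign_of_neg h]
        simp [abs_of_nonneg (Real.rpow_nonneg (abs_nonneg _) _)]
      · rw [Real.sign_of_pos h]
        simp [abs_of_nonneg (Real.rpow_nonneg (abs_nonneg _) _)]
    have h3 := habs2.congr' heq
    have h4 : |Real.sign a * |a| ^ (|a| ^ γ)| = (1:ℝ) := tendsto_nhds_unique h3 habs1
    rw [abs_mul] at h4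
    rcases hane.lt_or_gt with h | h
    · rw [Real.sign_of_neg h] at h4
      simpa [abs_of_nonneg (Real.rpow_nonneg (abs_nonneg _) _)] using h4
    · rw [Real.sign_of_pos h] at h4
      simpa [abs_of_nonneg (Real.rpow_nonneg (abs_nonneg _) _)] using h4
  · left
    have hψc : ContinuousAt (fun y : ℝ => Real.sign y * |y| ^ (|y| ^ γ)) (a + σ * K₁) :=
      (hasDerivAt_signTower (β := γ) hc).continuousAt
    have h5 : Filter.Tendsto (fun t => Real.sign (ptError β K₁ x₁ x₂ t) *
        |ptError β K₁ x₁ x₂ t| ^ (|ptError β K₁ x₁ x₂ t| ^ γ)) l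
        (nhds (Real.sign (a + σ*K₁) * |a + σ*K₁| ^ (|a + σ*K₁| ^ γ))) :=
      (hψc.tendsto).comp hz
    exact tendsto_nhds_unique h5 hψ

lemma no_transversal {β γ K₁ K₂ : ℝ} (hβ : 1 < β) (hγ : 0 < γ) (hK₁ : 0 < K₁) (hK₂ : 0 < K₂)
    (x₁ x₂ : ℝ → ℝ)
    (hC2 : ContDiffOn ℝ 1 x₂ (Set.Ici (0 : ℝ)))
    (hode1 : ∀ t ≥ (0 : ℝ), HasDerivAt x₁ (x₂ t) t)
    (hode2 : ∀ t ≥ (0 : ℝ), HasDerivAt x₂ (ptControl β γ K₁ K₂ x₁ x₂ t) t)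
    {t₀ : ℝ} (ht₀ : 0 < t₀) (hx0 : x₁ t₀ = 0) : x₂ t₀ = 0 := by
  by_contra hane
  set a := x₂ t₀ with ha
  -- value of the control at t₀
  have hut₀ : ptControl β γ K₁ K₂ x₁ x₂ t₀ = -K₂ * (Real.sign a * |a| ^ (|a| ^ γ)) := by
    have hz : ptError β K₁ x₁ x₂ t₀ = a := by
      simp only [ptError, hx0, Real.sign_zero, ← ha]; ring
    have e1 : (0:ℝ) ^ β = 0 := Real.zero_rpow (by positivity)
    have e2 : (0:ℝ) ^ ((0:ℝ)^β + β - 1) = 0 := by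
      rw [e1]
      exact Real.zero_rpow (by intro h; simp at h; linarith)
    simp only [ptControl, hz, hx0, abs_zero, e2]
    ring
  -- continuity of the control at t₀
  have hu_cont : Filter.Tendsto (ptControl β γ K₁ K₂ x₁ x₂) (nhds t₀)
      (nhds (-K₂ * (Real.sign a * |a| ^ (|a| ^ γ)))) := by
    have hder := hC2.continuousOn_derivWithin (uniqueDiffOn_Ici 0) (le_refl 1)
    have hcw := hder t₀ (Set.mem_Ici.mpr ht₀.le)
    have hnn : nhdsWithin t₀ (Set.Ici (0:ℝ)) = nhds t₀ :=
      nhdsWithin_eq_nhds.mpr (Ici_mem_nhds ht₀)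
    have hcw' : Filter.Tendsto (derivWithin x₂ (Set.Ici (0:ℝ))) (nhds t₀)
        (nhds (derivWithin x₂ (Set.Ici (0:ℝ)) t₀)) := by
      have := hcw.tendsto
      rwa [hnn] at this
    have heq : derivWithin x₂ (Set.Ici (0:ℝ)) =ᶠ[nhds t₀] ptControl β γ K₁ K₂ x₁ x₂ := by
      filter_upwards [eventually_gt_nhds ht₀] with t ht
      rw [derivWithin_of_mem_nhds (Ici_mem_nhds ht), (hode2 t ht.le).deriv]
    have hv : derivWithin x₂ (Set.Ici (0:ℝ)) t₀ = -K₂ * (Real.sign a * |a| ^ (|a| ^ γ)) := by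
      rw [derivWithin_of_mem_nhds (Ici_mem_nhds ht₀), (hode2 t₀ ht₀.le).deriv, hut₀]
    rw [← hv]
    exact hcw'.congr' heq
  have hd1 : HasDerivAt x₁ a t₀ := hode1 t₀ ht₀.le
  have hsn := sign_near x₁ hd1 hx0 hane
  have hcont1 : ContinuousAt x₁ t₀ := hd1.continuousAt
  have hcont2 : ContinuousAt x₂ t₀ := (hode2 t₀ ht₀.le).continuousAt
  have hlR : nhdsWithin t₀ (Set.Ioi t₀) ≤ nhdsWithin t₀ {y | y ≠ t₀} :=
    nhdsWithin_mono _ (fun y hy => ne_of_gt hy)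
  have hlL : nhdsWithin t₀ (Set.Iio t₀) ≤ nhdsWithin t₀ {y | y ≠ t₀} :=
    nhdsWithin_mono _ (fun y hy => ne_of_lt hy)
  have hR0 := side_limit hβ hγ hK₁ hK₂ x₁ x₂ (nhdsWithin t₀ (Set.Ioi t₀)) hlR
    hx0 rfl hane hsn.1 hcont1 hcont2 (hu_cont.mono_left nhdsWithin_le_nhds)
  have hL0 := side_limit hβ hγ hK₁ hK₂ x₁ x₂ (nhdsWithin t₀ (Set.Iio t₀)) hlL
    hx0 rfl hane hsn.2 hcont1 hcont2 (hu_cont.mono_left nhdsWithin_le_nhds)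
  rcases lt_or_gt_of_ne hane with hneg | hpos
  · -- a < 0 : sign a = -1; right side gives a - K₁, left side gives a + K₁
    rw [Real.sign_of_neg hneg] at hR0 hL0
    apply psi_triple hγ hK₁ hane
    · rcases hL0 with h | h
      · left
        rw [Real.sign_of_neg hneg, show a + K₁ = a + - -1 * K₁ by ring]
        exact h
      · right; exact ⟨by linarith [h.1], h.2⟩
    · rcases hR0 with h | h
      · left
        rw [Real.sign_of_neg hneg, show a - K₁ = a + -1 * K₁ by ring]
        exact h
      · right; exact ⟨by linarith [h.1], h.2⟩
  · rw [Real.sign_of_pos hpos] at hR0 hL0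
    apply psi_triple hγ hK₁ hane
    · rcases hR0 with h | h
      · left
        rw [Real.sign_of_pos hpos, show a + K₁ = a + 1 * K₁ by ring]
        exact h
      · right; exact ⟨by linarith [h.1], h.2⟩
    · rcases hL0 with h | h
      · left
        rw [Real.sign_of_pos hpos, show a - K₁ = a + -1 * K₁ by ring]
        exact h
      · right; exact ⟨by linarith [h.1], h.2⟩

lemma const_sign (x : ℝ → ℝ) {s t₁ : ℝ} (h : s < t₁)
    (hcont : ContinuousOn x (Set.Icc s t₁))
    (hne : ∀ t ∈ Set.Ioc s t₁, x t ≠ 0) :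
    ∀ t ∈ Set.Ioc s t₁, Real.sign (x t) = Real.sign (x t₁) := by
  intro t ht
  have hprod : 0 < x t * x t₁ := by
    rcases lt_trichotomy (x t * x t₁) 0 with hlt | heq | hgt
    · exfalso
      have hsub : Set.uIcc t t₁ ⊆ Set.Icc s t₁ := by
        rw [Set.uIcc_of_le ht.2]
        exact fun y hy => ⟨le_trans ht.1.le hy.1, hy.2⟩
      have h0 : (0:ℝ) ∈ Set.uIcc (x t) (x t₁) := by
        rcases mul_neg_iff.mp hlt with ⟨hp, hn⟩ | ⟨hn, hp⟩
        · exact Set.mem_uIcc.mpr (Or.inr ⟨hn.le, hp.le⟩)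
        · exact Set.mem_uIcc.mpr (Or.inl ⟨hn.le, hp.le⟩)
      obtain ⟨c, hc, hxc⟩ := intermediate_value_uIcc (hcont.mono hsub) h0
      rw [Set.uIcc_of_le ht.2] at hc
      exact hne c ⟨lt_of_lt_of_le ht.1 hc.1, hc.2⟩ hxc
    · exfalso
      rcases mul_eq_zero.mp heq with h0 | h0
      · exact hne t ht h0
      · exact hne t₁ ⟨h, le_refl _⟩ h0
    · exact hgt
  rcases mul_pos_iff.mp hprod with ⟨h1, h2⟩ | ⟨h1, h2⟩
  · rw [Real.sign_of_pos h1, Real.sign_of_pos h2]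
  · rw [Real.sign_of_neg h1, Real.sign_of_neg h2]

lemma u_tendsto {β γ K₁ K₂ : ℝ} (hβ : 1 < β) (hγ : 0 < γ) (hK₁ : 0 < K₁) (hK₂ : 0 < K₂)
    (x₁ x₂ : ℝ → ℝ) {s σ : ℝ} (l : Filter ℝ) (hl : l ≤ nhds s)
    (hx0 : x₁ s = 0) (hx2 : x₂ s = 0)
    (hcont1 : ContinuousAt x₁ s) (hcont2 : ContinuousAt x₂ s)
    (hσ : σ = 1 ∨ σ = -1)
    (hsign : ∀ᶠ t in l, Real.sign (x₁ t) = σ ∧ x₁ t ≠ 0) :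
    Filter.Tendsto (ptControl β γ K₁ K₂ x₁ x₂) l (nhds (-K₂ * σ * (K₁ ^ (K₁ ^ γ)))) := by
  have hx₁0 : Filter.Tendsto x₁ l (nhdsWithin 0 {y | y ≠ 0}) := by
    rw [tendsto_nhdsWithin_iff]
    refine ⟨?_, hsign.mono fun t ht => ht.2⟩
    have := hcont1.tendsto.mono_left hl
    rwa [hx0] at this
  have hx1t : Filter.Tendsto x₁ l (nhds 0) := by
    have := hcont1.tendsto.mono_left hl; rwa [hx0] at this
  have hx2t : Filter.Tendsto x₂ l (nhds 0) := by
    have := hcont2.tendsto.mono_left hl; rwa [hx2] at this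
  have htower : Filter.Tendsto (fun t => |x₁ t| ^ (|x₁ t| ^ β)) l (nhds 1) :=
    (tendsto_tower_one (lt_trans one_pos hβ)).comp hx₁0
  have hz : Filter.Tendsto (ptError β K₁ x₁ x₂) l (nhds (σ * K₁)) := by
    have h1 : Filter.Tendsto (fun t => x₂ t + K₁ * σ * |x₁ t| ^ (|x₁ t| ^ β)) l
        (nhds (0 + K₁ * σ * 1)) := hx2t.add ((htower.const_mul (K₁ * σ)))
    have h2 : (fun t => x₂ t + K₁ * σ * |x₁ t| ^ (|x₁ t| ^ β)) =ᶠ[l]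
        ptError β K₁ x₁ x₂ := by
      filter_upwards [hsign] with t ht
      simp only [ptError, ← ht.1]
    have := h1.congr' h2
    convert this using 2
    ring
  have hterm : Filter.Tendsto
      (fun t => x₁ t + K₁ * |x₁ t| ^ (|x₁ t| ^ β + β - 1) * (1 + β * Real.log |x₁ t|) * x₂ t)
      l (nhds 0) := by
    have h1 : Filter.Tendsto
        (fun t => |x₁ t| ^ (|x₁ t| ^ β + β - 1) * (1 + β * Real.log |x₁ t|)) l (nhds 0) :=
      (tendsto_towerDeriv_zero hβ).comp hx₁0
    have h2 := hx1t.add (((h1.const_mul K₁).mul hx2t))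
    simp only [add_zero, mul_zero, zero_mul] at h2
    convert h2 using 2 with t
    ring
  have hσK : σ * K₁ ≠ 0 := by
    rcases hσ with rfl | rfl
    · simpa using hK₁.ne'
    · simp [hK₁.ne']
  have hψc : ContinuousAt (fun y : ℝ => Real.sign y * |y| ^ (|y| ^ γ)) (σ * K₁) :=
    (hasDerivAt_signTower (β := γ) hσK).continuousAt
  have hψ : Filter.Tendsto (fun t => Real.sign (ptError β K₁ x₁ x₂ t) *
      |ptError β K₁ x₁ x₂ t| ^ (|ptError β K₁ x₁ x₂ t| ^ γ)) l
      (nhds (σ * (K₁ ^ (K₁ ^ γ)))) := by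
    have h5 := (hψc.tendsto).comp hz
    have hval : Real.sign (σ * K₁) * |σ * K₁| ^ (|σ * K₁| ^ γ) = σ * (K₁ ^ (K₁ ^ γ)) := by
      rcases hσ with rfl | rfl
      · rw [one_mul, Real.sign_of_pos hK₁, abs_of_pos hK₁, one_mul]
      · rw [show (-1:ℝ) * K₁ = -K₁ by ring, Real.sign_neg, abs_neg,
          Real.sign_of_pos hK₁, abs_of_pos hK₁]
    rwa [hval] at h5
  have hu' : Filter.Tendsto
      (fun t => -K₂ * (Real.sign (ptError β K₁ x₁ x₂ t) *
        |ptError β K₁ x₁ x₂ t| ^ (|ptError β K₁ x₁ x₂ t| ^ γ)) -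
        (x₁ t + K₁ * |x₁ t| ^ (|x₁ t| ^ β + β - 1) * (1 + β * Real.log |x₁ t|) * x₂ t)) l
      (nhds (-K₂ * (σ * (K₁ ^ (K₁ ^ γ))) - 0)) := (hψ.const_mul (-K₂)).sub hterm
  have heq : (fun t => -K₂ * (Real.sign (ptError β K₁ x₁ x₂ t) *
        |ptError β K₁ x₁ x₂ t| ^ (|ptError β K₁ x₁ x₂ t| ^ γ)) -
        (x₁ t + K₁ * |x₁ t| ^ (|x₁ t| ^ β + β - 1) * (1 + β * Real.log |x₁ t|) * x₂ t)) =
      ptControl β γ K₁ K₂ x₁ x₂ := by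
    funext t
    have hx2id : -K₁ * Real.sign (x₁ t) * |x₁ t| ^ (|x₁ t| ^ β) + ptError β K₁ x₁ x₂ t
        = x₂ t := by simp only [ptError]; ring
    simp only [ptControl, hx2id]
    ring
  rw [heq] at hu'
  have hval2 : -K₂ * (σ * (K₁ ^ (K₁ ^ γ))) - 0 = -K₂ * σ * (K₁ ^ (K₁ ^ γ)) := by ring
  rwa [hval2] at hu'

lemma expulsion {β γ K₁ K₂ : ℝ} (hβ : 1 < β) (hγ : 0 < γ) (hK₁ : 0 < K₁) (hK₂ : 0 < K₂)
    (x₁ x₂ : ℝ → ℝ)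
    (hode1 : ∀ t ≥ (0 : ℝ), HasDerivAt x₁ (x₂ t) t)
    (hode2 : ∀ t ≥ (0 : ℝ), HasDerivAt x₂ (ptControl β γ K₁ K₂ x₁ x₂ t) t)
    {s t₁ : ℝ} (hs : 0 ≤ s) (hst : s < t₁)
    (hx0 : x₁ s = 0) (hx2 : x₂ s = 0)
    (hne : ∀ t ∈ Set.Ioc s t₁, x₁ t ≠ 0) : False := by
  set σ := Real.sign (x₁ t₁) with hσdef
  have hcont1Icc : ContinuousOn x₁ (Set.Icc s t₁) := fun t ht =>
    ((hode1 t (le_trans hs ht.1)).continuousAt).continuousWithinAt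
  have hsig := const_sign x₁ hst hcont1Icc hne
  have hσpm : σ = 1 ∨ σ = -1 := by
    rcases lt_or_gt_of_ne (hne t₁ ⟨hst, le_refl _⟩) with h | h
    · right; rw [hσdef, Real.sign_of_neg h]
    · left; rw [hσdef, Real.sign_of_pos h]
  -- the control tends to -K₂ σ K₁^(K₁^γ) from the right of s
  have hevIoc : ∀ᶠ t in nhdsWithin s (Set.Ioi s), t ∈ Set.Ioc s t₁ :=
    Ioc_mem_nhdsGT_of_mem ⟨le_refl _, hst⟩
  have hsign : ∀ᶠ t in nhdsWithin s (Set.Ioi s), Real.sign (x₁ t) = σ ∧ x₁ t ≠ 0 := by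
    filter_upwards [hevIoc] with t ht
    exact ⟨hsig t ht, hne t ht⟩
  have hut := u_tendsto hβ hγ hK₁ hK₂ x₁ x₂ (nhdsWithin s (Set.Ioi s))
    nhdsWithin_le_nhds hx0 hx2 ((hode1 s hs).continuousAt)
    ((hode2 s hs).continuousAt) hσpm hsign
  set C := K₂ * K₁ ^ (K₁ ^ γ) with hC
  have hCpos : 0 < C := by
    have := Real.rpow_pos_of_pos hK₁ (K₁ ^ γ)
    positivity
  -- eventually σ * u t < -C/2
  have hσu : Filter.Tendsto (fun t => σ * ptControl β γ K₁ K₂ x₁ x₂ t)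
      (nhdsWithin s (Set.Ioi s)) (nhds (-C)) := by
    have := hut.const_mul σ
    have hval : σ * (-K₂ * σ * K₁ ^ (K₁ ^ γ)) = -C := by
      rcases hσpm with h | h <;> rw [h, hC] <;> ring
    rwa [hval] at this
  have hev2 : ∀ᶠ t in nhdsWithin s (Set.Ioi s),
      σ * ptControl β γ K₁ K₂ x₁ x₂ t < -C/2 := by
    apply hσu.eventually_lt_const
    linarith
  obtain ⟨b, hb, hsub⟩ := mem_nhdsGT_iff_exists_Ioc_subset.mp (hev2.and hevIoc)
  rw [Set.mem_Ioi] at hb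
  set b' := min b t₁ with hb'def
  have hb' : s < b' := lt_min hb hst
  have hb't₁ : b' ≤ t₁ := min_le_right _ _
  have hIocsub : Set.Ioc s b' ⊆ Set.Ioc s b := fun t ht => ⟨ht.1, le_trans ht.2 (min_le_left _ _)⟩
  have hx2neg : ∀ t ∈ Set.Ioc s b', σ * x₂ t ≤ -C/2 * (t - s) := by
    intro t ht
    have hstep := sub_le_of_hasDerivAt_le (f := fun τ => σ * x₂ τ)
      (f' := fun τ => σ * ptControl β γ K₁ K₂ x₁ x₂ τ) (c := -C/2) (a := s) (b := t)
      ht.1.le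
      (fun τ hτ => (hode2 τ (le_trans hs hτ.1)).const_mul σ)
      (fun τ hτ => (hsub (hIocsub ⟨hτ.1, le_trans hτ.2.le ht.2⟩)).1.le)
    simp only [hx2, mul_zero, sub_zero] at hstep
    linarith
  have hstep2 := sub_le_of_hasDerivAt_le (f := fun τ => σ * x₁ τ)
    (f' := fun τ => σ * x₂ τ) (c := 0) (a := s) (b := b') hb'.le
    (fun τ hτ => (hode1 τ (le_trans hs hτ.1)).const_mul σ)
    (fun τ hτ => by
      have h5 := hx2neg τ ⟨hτ.1, hτ.2.le⟩
      show σ * x₂ τ ≤ 0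
      nlinarith [hτ.1, hCpos])
  simp only [hx0, mul_zero, sub_zero, zero_mul] at hstep2
  -- but σ * x₁ b' = |x₁ b'| > 0
  have hsigb : Real.sign (x₁ b') = σ := hsig b' ⟨hb', hb't₁⟩
  have habs : σ * x₁ b' = |x₁ b'| := by
    rw [← hsigb, mul_comm]
    exact self_mul_sign' _
  have hpos : 0 < |x₁ b'| := abs_pos.mpr (hne b' ⟨hb', hb't₁⟩)
  linarith

/-- Theorem 1 (finite-time convergence): every C¹ solution of the closed loop
ẋ₁ = x₂, ẋ₂ = u with the power tower control reaches the origin in finite time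
and stays there. -/
theorem powerTower_finite_time (β γ K₁ K₂ : ℝ) (hβ : 1 < β) (hγ : 0 < γ)
    (hK₁ : 0 < K₁) (hK₂ : 0 < K₂)
    (x₁ x₂ : ℝ → ℝ)
    (hC1 : ContDiffOn ℝ 1 x₁ (Set.Ici (0 : ℝ)))
    (hC2 : ContDiffOn ℝ 1 x₂ (Set.Ici (0 : ℝ)))
    (hode1 : ∀ t ≥ (0 : ℝ), HasDerivAt x₁ (x₂ t) t)
    (hode2 : ∀ t ≥ (0 : ℝ), HasDerivAt x₂ (ptControl β γ K₁ K₂ x₁ x₂ t) t) :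
    ∃ T ≥ (0 : ℝ), ∀ t ≥ T, x₁ t = 0 ∧ x₂ t = 0 := by
  obtain ⟨t₀, ht₀, hx0⟩ := exists_x1_zero hβ hγ hK₁ hK₂ x₁ x₂ hode1 hode2
  refine ⟨t₀, ht₀.le, ?_⟩
  have hall : ∀ t ≥ t₀, x₁ t = 0 := by
    by_contra hcon
    push_neg at hcon
    obtain ⟨t₁, ht₁, hx₁ne⟩ := hcon
    have ht₀t₁ : t₀ < t₁ := by
      rcases lt_or_eq_of_le ht₁ with h | h
      · exact h
      · exact absurd (h ▸ hx0) hx₁ne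
    set Z := Set.Icc t₀ t₁ ∩ x₁ ⁻¹' {0} with hZ
    have hZclosed : IsClosed Z := by
      apply ContinuousOn.preimage_isClosed_of_isClosed
        (fun t ht => ((hode1 t (by linarith [ht.1])).continuousAt).continuousWithinAt)
        isClosed_Icc isClosed_singleton
    have hZne : Z.Nonempty := ⟨t₀, ⟨le_refl _, ht₀t₁.le⟩, hx0⟩
    have hZbdd : BddAbove Z := ⟨t₁, fun t ht => ht.1.2⟩
    set s := sSup Z with hs
    have hsZ : s ∈ Z := hZclosed.csSup_mem hZne hZbdd
    have hst₀ : t₀ ≤ s := le_csSup hZbdd ⟨⟨le_refl _, ht₀t₁.le⟩, hx0⟩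
    have hst₁ : s ≤ t₁ := csSup_le hZne (fun t ht => ht.1.2)
    have hslt : s < t₁ := by
      rcases lt_or_eq_of_le hst₁ with h | h
      · exact h
      · exact absurd (h ▸ hsZ.2) hx₁ne
    have hspos : 0 < s := lt_of_lt_of_le ht₀ hst₀
    have hx1s : x₁ s = 0 := hsZ.2
    have hx2s : x₂ s = 0 :=
      no_transversal hβ hγ hK₁ hK₂ x₁ x₂ hC2 hode1 hode2 hspos hx1s
    have hne : ∀ t ∈ Set.Ioc s t₁, x₁ t ≠ 0 := by
      intro t ht h0
      have htZ : t ∈ Z := ⟨⟨le_trans hst₀ ht.1.le, ht.2⟩, h0⟩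
      exact absurd (le_csSup hZbdd htZ) (not_le.mpr ht.1)
    exact expulsion hβ hγ hK₁ hK₂ x₁ x₂ hode1 hode2 hspos.le hslt hx1s hx2s hne
  intro t ht
  refine ⟨hall t ht, ?_⟩
  exact no_transversal hβ hγ hK₁ hK₂ x₁ x₂ hC2 hode1 hode2
    (lt_of_lt_of_le ht₀ ht) (hall t ht)
end

section
/- Let β > 1 and k > 0 be real constants and d, u : ℝ → ℝ. Let x₁, x₂ be differentiable at a time t with x₁(t) ≠ 0, satisfying ẋ₁(t) = x₂(t) and ẋ₂(t) = u(t) + d(t). Then the power-tower terminal sliding surface s = x₂ + k·sign(x₁)·|x₁|^(|x₁|^β) is differentiable at t with ṡ(t) = u(t) + d(t) + k·|x₁(t)|^(|x₁(t)|^β + β − 1)·(1 + β·ln|x₁(t)|)·x₂(t). -/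
/-- Power-tower terminal sliding surface: s = x₂ + k·sign(x₁)·|x₁|^(|x₁|^β) is
differentiable along the perturbed double integrator with
ṡ = u + d + k·|x₁|^(|x₁|^β + β − 1)·(1 + β·ln|x₁|)·x₂. -/
theorem powerTower_terminal_surface_deriv (β k : ℝ) (hβ : 1 < β) (hk : 0 < k)
    (d u : ℝ → ℝ) (x₁ x₂ : ℝ → ℝ) (t x₁' x₂' : ℝ)
    (hx₁ : HasDerivAt x₁ x₁' t) (hx₂ : HasDerivAt x₂ x₂' t)
    (hne : x₁ t ≠ 0)
    (h1 : x₁' = x₂ t) (h2 : x₂' = u t + d t) :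
    HasDerivAt (fun s : ℝ => x₂ s + k * Real.sign (x₁ s) * |x₁ s| ^ (|x₁ s| ^ β))
      (u t + d t +
        k * |x₁ t| ^ (|x₁ t| ^ β + β - 1) * (1 + β * Real.log |x₁ t|) * x₂ t) t := by
  subst h1 h2
  set σ : ℝ := Real.sign (x₁ t) with hσ
  -- derivative of L s = log (x₁ s)
  have hL : HasDerivAt (fun s => Real.log (x₁ s)) (x₂ t / x₁ t) t := hx₁.log hne
  -- inner function: log (x₁ s) * exp (log (x₁ s) * β)
  have hA : HasDerivAt (fun s => Real.exp (Real.log (x₁ s) * β))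
      (Real.exp (Real.log (x₁ t) * β) * (x₂ t / x₁ t * β)) t :=
    (hL.mul_const β).exp
  have hAL : HasDerivAt (fun s => Real.log (x₁ s) * Real.exp (Real.log (x₁ s) * β))
      (x₂ t / x₁ t * Real.exp (Real.log (x₁ t) * β) +
        Real.log (x₁ t) * (Real.exp (Real.log (x₁ t) * β) * (x₂ t / x₁ t * β))) t :=
    hL.mul hA
  have hE := hAL.exp
  have hF := hx₂.add ((hE.const_mul (k * σ)))
  -- eventual equality of the two functions near t
  have hb : (0:ℝ) < |x₁ t| := abs_pos.mpr hne
  have hev : (fun s : ℝ => x₂ s + k * Real.sign (x₁ s) * |x₁ s| ^ (|x₁ s| ^ β)) =ᶠ[nhds t]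
      (fun s => x₂ s + k * σ *
        Real.exp (Real.log (x₁ s) * Real.exp (Real.log (x₁ s) * β))) := by
    have hcont : ContinuousAt x₁ t := hx₁.continuousAt
    have hne' : ∀ᶠ s in nhds t, x₁ s ≠ 0 ∧ Real.sign (x₁ s) = σ := by
      rcases hne.lt_or_gt with h | h
      · filter_upwards [hcont.eventually (eventually_lt_nhds h)] with s hs
        exact ⟨hs.ne, by rw [hσ, Real.sign_of_neg hs, Real.sign_of_neg h]⟩
      · filter_upwards [hcont.eventually (eventually_gt_nhds h)] with s hs
        exact ⟨hs.ne', by rw [hσ, Real.sign_of_pos hs, Real.sign_of_pos h]⟩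
    filter_upwards [hne'] with s ⟨hs0, hss⟩
    have hbs : (0:ℝ) < |x₁ s| := abs_pos.mpr hs0
    rw [hss, Real.rpow_def_of_pos hbs, Real.rpow_def_of_pos hbs, Real.log_abs]
  refine HasDerivAt.congr_of_eventuallyEq ?_ hev
  -- now fix the derivative value
  convert hF using 1
  · rfl
  have hσs : σ * σ = 1 := by
    rcases hne.lt_or_gt with h | h
    · rw [hσ, Real.sign_of_neg h]; norm_num
    · rw [hσ, Real.sign_of_pos h]; norm_num
  have hσx : σ * (x₁ t)⁻¹ = |x₁ t|⁻¹ := by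
    rcases hne.lt_or_gt with h | h
    · rw [hσ, Real.sign_of_neg h, abs_of_neg h]; field_simp
    · rw [hσ, Real.sign_of_pos h, abs_of_pos h, one_mul]
  have hA' : |x₁ t| ^ β = Real.exp (Real.log (x₁ t) * β) := by
    rw [Real.rpow_def_of_pos hb, Real.log_abs]
  have hpow : |x₁ t| ^ (|x₁ t| ^ β + β - 1)
      = Real.exp (Real.log (x₁ t) * Real.exp (Real.log (x₁ t) * β)) *
        Real.exp (Real.log (x₁ t) * β) * |x₁ t|⁻¹ := by
    rw [Real.rpow_def_of_pos hb, Real.log_abs, hA']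
    rw [mul_sub, mul_add, Real.exp_sub, Real.exp_add, mul_one]
    rw [show Real.exp (Real.log (x₁ t)) = |x₁ t| by
      rw [← Real.log_abs, Real.exp_log hb]]
    ring
  rw [hpow, Real.log_abs, ← hσx, div_eq_mul_inv]
  ring
end

section
/- For every real β > 1, the function x ↦ |x|^(β − 1)·ln|x| tends to 0 as x tends to 0 along nonzero values; consequently the feedback term k·|x₁|^(|x₁|^β + β − 1)·(1 + β·ln|x₁|)·x₂ appearing in the power-tower terminal sliding mode control law has no singularity at x₁ = 0 (its limit as x₁ → 0 is 0 for any fixed x₂ and k), in contrast with the classical terminal sliding surface s = x₂ + k·sign(x₁)·|x₁|^(q/p) with 0 < q < p. -/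
open Real Filter

private lemma abs_tendsto_pos : Filter.Tendsto (fun x : ℝ => |x|)
    (nhdsWithin 0 {0}ᶜ) (nhdsWithin 0 (Set.Ioi 0)) := by
  apply tendsto_nhdsWithin_of_tendsto_nhds_of_eventually_within
  · exact ((continuous_abs.tendsto (0:ℝ)).mono_left nhdsWithin_le_nhds).congr (fun x => rfl) |>.trans (by simp [tendsto_id])
  · filter_upwards [self_mem_nhdsWithin] with x hx
    exact abs_pos.mpr hx

private lemma key (r : ℝ) (hr : 0 < r) :
    Filter.Tendsto (fun x : ℝ => |x| ^ r * Real.log |x|)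
      (nhdsWithin 0 {0}ᶜ) (nhds 0) := by
  have h := (tendsto_log_mul_rpow_nhdsGT_zero hr).comp abs_tendsto_pos
  simpa [Function.comp_def, mul_comm, Real.log_abs] using h

/-- For β > 1, |x|^(β−1)·ln|x| → 0 as x → 0 along nonzero values; consequently
the feedback term k·|x₁|^(|x₁|^β + β − 1)·(1 + β·ln|x₁|)·x₂ of the power-tower
terminal sliding mode control has no singularity at x₁ = 0: its limit is 0. -/
theorem powerTower_terminal_no_singularity (β : ℝ) (hβ : 1 < β) :
    Filter.Tendsto (fun x : ℝ => |x| ^ (β - 1) * Real.log |x|)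
      (nhdsWithin 0 {0}ᶜ) (nhds 0) ∧
    ∀ k x₂ : ℝ,
      Filter.Tendsto
        (fun x₁ : ℝ =>
          k * |x₁| ^ (|x₁| ^ β + β - 1) * (1 + β * Real.log |x₁|) * x₂)
        (nhdsWithin 0 {0}ᶜ) (nhds 0) := by
  have hβ1 : (0:ℝ) < β - 1 := by linarith
  have h1 := key (β - 1) hβ1
  refine ⟨h1, fun k x₂ => ?_⟩
  -- |x|^(|x|^β) → 1
  have hpow1 : Filter.Tendsto (fun x : ℝ => |x| ^ (|x| ^ β))
      (nhdsWithin 0 {0}ᶜ) (nhds 1) := by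
    have hβ0 : (0:ℝ) < β := by linarith
    have h2 := key β hβ0
    have := (Real.continuous_exp.tendsto 0).comp h2
    rw [Real.exp_zero] at this
    refine this.congr' ?_
    filter_upwards [self_mem_nhdsWithin] with x hx
    have hx' : 0 < |x| := abs_pos.mpr hx
    simp [Function.comp, Real.rpow_def_of_pos hx', mul_comm]
  -- |x|^(β-1) → 0
  have hsmall : Filter.Tendsto (fun x : ℝ => |x| ^ (β - 1))
      (nhdsWithin 0 {0}ᶜ) (nhds 0) := by
    have := (Real.continuous_rpow_const (le_of_lt hβ1)).tendsto (0:ℝ)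
    have h := this.comp (abs_tendsto_pos.mono_right nhdsWithin_le_nhds)
    simpa [Function.comp_def, Real.zero_rpow (ne_of_gt hβ1)] using h
  -- inner factor → 0
  have hinner : Filter.Tendsto (fun x : ℝ => |x| ^ (β - 1) * (1 + β * Real.log |x|))
      (nhdsWithin 0 {0}ᶜ) (nhds 0) := by
    have h : Filter.Tendsto
        (fun x : ℝ => |x| ^ (β - 1) + β * (|x| ^ (β - 1) * Real.log |x|))
        (nhdsWithin 0 {0}ᶜ) (nhds (0 + β * 0)) := hsmall.add (h1.const_mul β)
    rw [mul_zero, add_zero] at h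
    refine h.congr fun x => ?_
    ring
  have hmain : Filter.Tendsto
      (fun x : ℝ => k * x₂ * (|x| ^ (|x| ^ β) * (|x| ^ (β - 1) * (1 + β * Real.log |x|))))
      (nhdsWithin 0 {0}ᶜ) (nhds (k * x₂ * (1 * 0))) :=
    Filter.Tendsto.const_mul _ (hpow1.mul hinner)
  rw [one_mul, mul_zero] at hmain
  refine hmain.congr' ?_
  filter_upwards [self_mem_nhdsWithin] with x hx
  have hx' : 0 < |x| := abs_pos.mpr hx
  have hsplit : |x| ^ (|x| ^ β + β - 1) = |x| ^ (|x| ^ β) * |x| ^ (β - 1) := by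
    rw [← Real.rpow_add hx', add_sub_assoc]
  rw [hsplit]; ring
end
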